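/- arXiv:2107.05776 — 4 statements merged into one kernel-verified Lean document; each statement's English description precedes it below -/
import Mathlib

section
/- (Key lemma in the proof of uniqueness of the pushout; group case.) Assume (Σ, ι, p) is a compatible extension of G by A and f : A → B is a continuous G-equivariant group homomorphism. Suppose (Σ', ι', p') is a compatible extension of G by B and f' : Σ → Σ' is a continuous group homomorphism satisfying ι' ∘ f = f' ∘ ι and p' ∘ f' = p. Then the map g̃ : B ⋊ Σ → Σ' defined by g̃(b, σ) = ι'(b)·f'(σ) is a continuous surjective group homomorphism whose kernel is exactly θ(A) = {(−f(a), ι(a)) : a ∈ A}. -/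
open Topology

section Core

variable {G S A : Type*}

/-- The semidirect product `B ⋊ S`, where `S` acts on `B` through `p : S →* G`
and a given action of `G` on `B`.  Multiplication is
`(b₁, σ₁) * (b₂, σ₂) = (b₁ + p σ₁ • b₂, σ₁ * σ₂)`. -/
def SDP (B S : Type*) {G : Type*} [Group G] [Group S] [AddCommGroup B]
    [DistribMulAction G B] (p : S →* G) : Type _ := B × S

namespace SDP

variable {B : Type*} [Group G] [Group S] [AddCommGroup B] [DistribMulAction G B]
  (p : S →* G)

instance instGroup : Group (SDP B S p) where
  mul x y := (x.1 + p x.2 • y.1, x.2 * y.2)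
  one := ((0 : B), (1 : S))
  inv x := (-((p x.2)⁻¹ • x.1), x.2⁻¹)
  mul_assoc x y z := by
    refine Prod.ext ?_ (mul_assoc _ _ _)
    show (x.1 + p x.2 • y.1) + p (x.2 * y.2) • z.1
        = x.1 + p x.2 • (y.1 + p y.2 • z.1)
    simp [map_mul, mul_smul, smul_add, add_assoc]
  one_mul x := by
    refine Prod.ext ?_ (one_mul _)
    show (0 : B) + p 1 • x.1 = x.1
    simp
  mul_one x := by
    refine Prod.ext ?_ (mul_one _)
    show x.1 + p x.2 • (0 : B) = x.1
    simp
  inv_mul_cancel x := by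
    refine Prod.ext ?_ (inv_mul_cancel _)
    show -((p x.2)⁻¹ • x.1) + p x.2⁻¹ • x.1 = 0
    simp

instance instTopologicalSpace [TopologicalSpace B] [TopologicalSpace S] :
    TopologicalSpace (SDP B S p) :=
  instTopologicalSpaceProd

@[simp] lemma mul_def (x y : SDP B S p) :
    x * y = (x.1 + p x.2 • y.1, x.2 * y.2) := rfl

@[simp] lemma one_def : (1 : SDP B S p) = ((0 : B), (1 : S)) := rfl

@[simp] lemma inv_def (x : SDP B S p) :
    x⁻¹ = (-((p x.2)⁻¹ • x.1), x.2⁻¹) := rfl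

end SDP

/-- A compatible extension `A → S → G` of the topological group `G` by the
abelian topological group `A`, which carries an action of `G`:
`ι` is a continuous injective group homomorphism which is a homeomorphism onto
its image, `p` is a continuous open surjective homomorphism whose kernel is
exactly the image of `ι`, and conjugation in `S` induces the given action of
`G` on `A`. -/
structure IsCompatibleExtension
    [Group G] [TopologicalSpace G]
    [AddCommGroup A] [TopologicalSpace A] [DistribMulAction G A]
    [Group S] [TopologicalSpace S]
    (ι : A → S) (p : S →* G) : Prop where
  /-- The middle term is a topological group. -/
  topGroup : IsTopologicalGroup S
  /-- `ι` is a group homomorphism (from the additive group `A`). -/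
  ι_hom : ∀ a a', ι (a + a') = ι a * ι a'
  /-- `ι` is a homeomorphism onto its image (in particular continuous and
  injective). -/
  ι_embedding : IsEmbedding ι
  /-- `p` is continuous. -/
  p_cont : Continuous p
  /-- `p` is open. -/
  p_open : IsOpenMap p
  /-- `p` is surjective. -/
  p_surj : Function.Surjective p
  /-- The image of `ι` is exactly the kernel of `p`. -/
  range_ι : Set.range ι = ⇑p ⁻¹' {1}
  /-- The extension is compatible: conjugation induces the given `G`-action. -/
  compat : ∀ (σ : S) (a : A), σ * ι a * σ⁻¹ = ι (p σ • a)

end Core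

/-- (Key lemma in the proof of uniqueness of the pushout;
group case.)  Let `(Σ, ι, p)` be a compatible extension of `G` by `A`, let
`f : A → B` be a continuous `G`-equivariant homomorphism, let
`(Σ', ι', p')` be a compatible extension of `G` by `B`, and let
`f' : Σ → Σ'` be a continuous homomorphism with `ι' ∘ f = f' ∘ ι` and
`p' ∘ f' = p`.  Then `gTilde : B ⋊ Σ → Σ'`, `gTilde(b, σ) = ι'(b)·f'(σ)`, is a
continuous surjective group homomorphism with kernel exactly
`θ(A) = {(−f a, ι a) : a ∈ A}`. -/
theorem pushout_uniqueness_key_lemma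
    {G A B S S' : Type*} [Group G] [TopologicalSpace G] [IsTopologicalGroup G]
    [AddCommGroup A] [TopologicalSpace A] [IsTopologicalAddGroup A]
    [DistribMulAction G A] [ContinuousSMul G A]
    [AddCommGroup B] [TopologicalSpace B] [IsTopologicalAddGroup B]
    [DistribMulAction G B] [ContinuousSMul G B]
    [Group S] [TopologicalSpace S] [IsTopologicalGroup S]
    [Group S'] [TopologicalSpace S'] [IsTopologicalGroup S']
    (ι : A → S) (p : S →* G) (hE : IsCompatibleExtension ι p)
    (f : A → B) (hf_cont : Continuous f)
    (hf_hom : ∀ a a', f (a + a') = f a + f a')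
    (hf_equiv : ∀ (g : G) (a : A), f (g • a) = g • f a)
    (ι' : B → S') (p' : S' →* G) (hE' : IsCompatibleExtension ι' p')
    (f' : S → S') (hf'_cont : Continuous f')
    (hf'_hom : ∀ σ τ, f' (σ * τ) = f' σ * f' τ)
    (hf'_ι : ∀ a, ι' (f a) = f' (ι a))
    (hf'_p : ∀ σ, p' (f' σ) = p σ)
    (θ : A → SDP B S p) (hθ : ∀ a, θ a = (-f a, ι a))
    (gTilde : SDP B S p → S') (hgTilde : ∀ x : SDP B S p, gTilde x = ι' x.1 * f' x.2) :
    Continuous gTilde ∧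
    Function.Surjective gTilde ∧
    (∀ x y : SDP B S p, gTilde (x * y) = gTilde x * gTilde y) ∧
    {x : SDP B S p | gTilde x = 1} = Set.range θ := by
  have hι'0 : ι' (0 : B) = 1 := by
    have := hE'.ι_hom 0 0
    rw [add_zero] at this
    exact (mul_eq_left.mp this.symm)
  have hι'neg : ∀ b : B, ι' (-b) = (ι' b)⁻¹ := by
    intro b
    have := hE'.ι_hom b (-b)
    rw [add_neg_cancel, hι'0] at this
    exact eq_inv_of_mul_eq_one_right this.symm
  have hp'ι' : ∀ b : B, p' (ι' b) = 1 := by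
    intro b
    have : ι' b ∈ Set.range ι' := ⟨b, rfl⟩
    rw [hE'.range_ι] at this
    exact this
  have hconj : ∀ (σ : S) (b : B), f' σ * ι' b = ι' (p σ • b) * f' σ := by
    intro σ b
    have h := hE'.compat (f' σ) b
    rw [hf'_p] at h
    calc f' σ * ι' b = (f' σ * ι' b * (f' σ)⁻¹) * f' σ := by group
      _ = ι' (p σ • b) * f' σ := by rw [h]
  refine ⟨?_, ?_, ?_, ?_⟩
  · have : gTilde = fun x : B × S => ι' x.1 * f' x.2 := funext hgTilde
    rw [this]
    exact ((hE'.ι_embedding.continuous.comp continuous_fst).mul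
      (hf'_cont.comp continuous_snd))
  · intro τ
    obtain ⟨σ, hσ⟩ := hE.p_surj (p' τ)
    have hker : τ * (f' σ)⁻¹ ∈ Set.range ι' := by
      rw [hE'.range_ι]
      simp [map_mul, hf'_p, hσ]
    obtain ⟨b, hb⟩ := hker
    refine ⟨(b, σ), ?_⟩
    refine (hgTilde _).trans ?_
    show ι' b * f' σ = τ
    rw [hb]; group
  · intro x y
    rw [hgTilde, hgTilde, hgTilde, SDP.mul_def]
    show ι' (x.1 + p x.2 • y.1) * f' (x.2 * y.2) =
      (ι' x.1 * f' x.2) * (ι' y.1 * f' y.2)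
    rw [hE'.ι_hom, hf'_hom, mul_assoc,
      ← mul_assoc (ι' (p x.2 • y.1)) (f' x.2) (f' y.2), ← hconj x.2 y.1]
    group
  · ext x
    simp only [Set.mem_setOf_eq, Set.mem_range]
    constructor
    · intro hx
      rw [hgTilde] at hx
      have hps : p x.2 = 1 := by
        have h1 : p' (ι' x.1 * f' x.2) = 1 := by rw [hx]; simp
        rw [map_mul, hp'ι', one_mul, hf'_p] at h1
        exact h1
      have : x.2 ∈ Set.range ι := by rw [hE.range_ι]; exact hps
      obtain ⟨a, ha⟩ := this
      have : ι' x.1 * ι' (f a) = 1 := by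
        rw [hf'_ι, ha]; exact hx
      rw [← hE'.ι_hom] at this
      have hinj := hE'.ι_embedding.injective
      have hx1 : x.1 + f a = 0 := by
        apply hinj
        rw [this, hι'0]
      refine ⟨a, ?_⟩
      rw [hθ]
      have hx1' : (-f a : B) = x.1 := by
        have : x.1 = -f a := by
          rw [← add_zero (-f a), ← hx1]; abel
        exact this.symm
      exact Prod.ext hx1' ha
    · rintro ⟨a, rfl⟩
      rw [hgTilde, hθ]
      show ι' (-f a) * f' (ι a) = 1
      rw [← hf'_ι, hι'neg, inv_mul_cancel]
end

section
/- (Uniqueness of the pushout up to proper isomorphism; group case.) Assume G, A, B and all extension groups below are locally compact Hausdorff, (Σ, ι, p) is a compatible extension of G by A, and f : A → B is a continuous G-equivariant group homomorphism. If (Σ₁, f₁) and (Σ₂, f₂) are both f-pushouts of (Σ, ι, p), then there exists an isomorphism of topological groups g : Σ₁ → Σ₂ such that g ∘ ι₁ = ι₂, p₂ ∘ g = p₁, and g ∘ f₁ = f₂. -/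
open Topology

section Core

variable {G S A : Type*}

/-- Given a compatible extension `(S, ι, p)` of `G` by `A` and a continuous
`G`-equivariant homomorphism `f : A → B`, the pair `(S', f')` is an
`f`-pushout of `(S, ι, p)` if `(S', ι', p')` is a compatible extension of `G`
by `B` and `f' : S → S'` is a continuous homomorphism satisfying
`ι' ∘ f = f' ∘ ι` and `p' ∘ f' = p`. -/
structure IsPushout
    {G A B S S' : Type*} [Group G] [TopologicalSpace G]
    [AddCommGroup A] [TopologicalSpace A] [DistribMulAction G A]
    [AddCommGroup B] [TopologicalSpace B] [DistribMulAction G B]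
    [Group S] [TopologicalSpace S] [Group S'] [TopologicalSpace S']
    (ι : A → S) (p : S →* G) (f : A → B)
    (ι' : B → S') (p' : S' →* G) (f' : S → S') : Prop where
  /-- `(S', ι', p')` is a compatible extension of `G` by `B`. -/
  ext : IsCompatibleExtension ι' p'
  /-- `f'` is continuous. -/
  f'_cont : Continuous f'
  /-- `f'` is a group homomorphism. -/
  f'_hom : ∀ σ τ, f' (σ * τ) = f' σ * f' τ
  /-- `ι' ∘ f = f' ∘ ι`. -/
  comm_ι : ∀ a, ι' (f a) = f' (ι a)
  /-- `p' ∘ f' = p`. -/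
  comm_p : ∀ σ, p' (f' σ) = p σ

end Core

section Aux

variable {G A B S S' : Type*} [Group G] [TopologicalSpace G]
    [AddCommGroup A] [TopologicalSpace A] [DistribMulAction G A]
    [AddCommGroup B] [TopologicalSpace B] [IsTopologicalAddGroup B]
    [DistribMulAction G B] [ContinuousSMul G B]
    [Group S] [TopologicalSpace S] [IsTopologicalGroup S]
    [Group S'] [TopologicalSpace S']
    {ι : A → S} {p : S →* G} {f : A → B}
    {ι' : B → S'} {p' : S' →* G} {f' : S → S'}

lemma aux_hom_map_zero {A S : Type*} [AddCommGroup A] [Group S] {ι : A → S}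
    (hι : ∀ a a', ι (a + a') = ι a * ι a') : ι 0 = 1 := by
  have h : ι 0 * ι 0 = ι 0 * 1 := by rw [← hι, add_zero, mul_one]
  exact mul_left_cancel h

lemma aux_mhom_map_one {S S' : Type*} [Group S] [Group S'] {f' : S → S'}
    (h : ∀ σ τ, f' (σ * τ) = f' σ * f' τ) : f' 1 = 1 := by
  have h1 : f' 1 * f' 1 = f' 1 * 1 := by rw [← h, one_mul, mul_one]
  exact mul_left_cancel h1

omit [IsTopologicalGroup S] in
lemma aux_p_ι (hE : IsCompatibleExtension ι p) (a : A) : p (ι a) = 1 := by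
  have : ι a ∈ Set.range ι := Set.mem_range_self a
  rw [hE.range_ι] at this
  exact this

omit [IsTopologicalGroup S] in
lemma aux_mem_ker (hE : IsCompatibleExtension ι p) {s : S} (hs : p s = 1) :
    ∃ a, ι a = s := by
  have : s ∈ Set.range ι := by rw [hE.range_ι]; exact hs
  exact this

omit [IsTopologicalAddGroup B] [ContinuousSMul G B] [IsTopologicalGroup S] in
/-- The multiplication rule for elements written as `ι' b * f' σ`. -/
lemma aux_pushout_mul (hP : IsPushout ι p f ι' p' f') (b b' : B) (σ σ' : S) :
    (ι' b * f' σ) * (ι' b' * f' σ') = ι' (b + p σ • b') * f' (σ * σ') := by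
  have h1 : f' σ * ι' b' * (f' σ)⁻¹ = ι' (p σ • b') := by
    rw [hP.ext.compat (f' σ) b', hP.comm_p]
  rw [hP.ext.ι_hom, ← h1, hP.f'_hom]
  group

omit [IsTopologicalAddGroup B] [ContinuousSMul G B] [IsTopologicalGroup S] in
/-- Every element of the extension `S'` can be written as `ι' b * f' σ`. -/
lemma aux_pushout_surj (hE : IsCompatibleExtension ι p)
    (hP : IsPushout ι p f ι' p' f') (x : S') :
    ∃ w : B × S, ι' w.1 * f' w.2 = x := by
  obtain ⟨σ, hσ⟩ := hE.p_surj (p' x)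
  have hker : p' (x * (f' σ)⁻¹) = 1 := by
    rw [map_mul, map_inv, hP.comm_p, hσ, mul_inv_cancel]
  obtain ⟨b, hb⟩ := aux_mem_ker hP.ext hker
  exact ⟨(b, σ), by rw [hb]; group⟩

omit [IsTopologicalAddGroup B] [ContinuousSMul G B] [IsTopologicalGroup S] in
/-- `p'` applied to `ι' b * f' σ` is `p σ`. -/
lemma aux_pushout_p (hP : IsPushout ι p f ι' p' f') (b : B) (σ : S) :
    p' (ι' b * f' σ) = p σ := by
  rw [map_mul, aux_p_ι hP.ext, one_mul, hP.comm_p]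

omit [IsTopologicalAddGroup B] [ContinuousSMul G B] [IsTopologicalGroup S] in
/-- The canonical map `B × S → S'` maps neighbourhoods of `(0, 1)` to
neighbourhoods of `1`. -/
lemma aux_pushout_nhds_one (hE : IsCompatibleExtension ι p)
    (hP : IsPushout ι p f ι' p' f')
    {W : Set (B × S)} (hW : W ∈ 𝓝 ((0 : B), (1 : S))) :
    (fun w : B × S => ι' w.1 * f' w.2) '' W ∈ 𝓝 (1 : S') := by
  haveI := hP.ext.topGroup
  obtain ⟨U, hU, V, hV, hUV⟩ := mem_nhds_prod_iff.mp hW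
  -- use that `ι'` is an embedding to thicken `U` to an open set in `S'`
  have hι'0 : ι' 0 = 1 := aux_hom_map_zero hP.ext.ι_hom
  have hcomap : U ∈ Filter.comap ι' (𝓝 (1 : S')) := by
    rw [← hι'0, ← hP.ext.ι_embedding.toIsInducing.nhds_eq_comap]
    exact hU
  obtain ⟨U', hU', hU'sub⟩ := Filter.mem_comap.mp hcomap
  obtain ⟨Z, hZ, hZsplit⟩ := exists_nhds_one_split hU'
  have hf'1 : f' 1 = 1 := aux_mhom_map_one hP.f'_hom
  -- shrink V so that `(f' σ)⁻¹ ∈ Z` on it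
  have hpre : (fun σ : S => (f' σ)⁻¹) ⁻¹' Z ∈ 𝓝 (1 : S) := by
    have hc : ContinuousAt (fun σ : S => (f' σ)⁻¹) 1 := (hP.f'_cont.inv).continuousAt
    apply hc.preimage_mem_nhds
    rw [hf'1, inv_one]; exact hZ
  set V₀ : Set S := V ∩ (fun σ : S => (f' σ)⁻¹) ⁻¹' Z with hV₀def
  have hV₀ : V₀ ∈ 𝓝 (1 : S) := Filter.inter_mem hV hpre
  -- the candidate neighbourhood of 1 in S'
  have hpV₀ : p '' V₀ ∈ 𝓝 (1 : G) := by
    have := hE.p_open.image_mem_nhds hV₀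
    rwa [map_one] at this
  have hN : Z ∩ ⇑p' ⁻¹' (p '' V₀) ∈ 𝓝 (1 : S') := by
    refine Filter.inter_mem hZ ?_
    have hc : ContinuousAt (⇑p') (1 : S') := hP.ext.p_cont.continuousAt
    have := hc.preimage_mem_nhds (by rwa [map_one] : p '' V₀ ∈ 𝓝 (p' (1 : S')))
    exact this
  refine Filter.mem_of_superset hN ?_
  rintro x ⟨hxZ, hxp⟩
  obtain ⟨σ, hσV₀, hpσ⟩ := hxp
  have hker : p' (x * (f' σ)⁻¹) = 1 := by
    rw [map_mul, map_inv, hP.comm_p, hpσ, mul_inv_cancel]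
  obtain ⟨b, hb⟩ := aux_mem_ker hP.ext hker
  have hbU' : ι' b ∈ U' := by
    rw [hb]; exact hZsplit x hxZ _ hσV₀.2
  have hbU : b ∈ U := hU'sub hbU'
  exact ⟨(b, σ), hUV ⟨hbU, hσV₀.1⟩, by simp only []; rw [hb]; group⟩

/-- The canonical map `B × S → S'` is open. -/
lemma aux_pushout_isOpenMap (hE : IsCompatibleExtension ι p)
    (hP : IsPushout ι p f ι' p' f') :
    IsOpenMap (fun w : B × S => ι' w.1 * f' w.2) := by
  haveI := hP.ext.topGroup
  intro W hWopen
  rw [isOpen_iff_mem_nhds]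
  rintro x ⟨⟨b₀, σ₀⟩, hw₀, rfl⟩
  set L : B × S → B × S := fun w => (b₀ + p σ₀ • w.1, σ₀ * w.2) with hLdef
  have hLcont : Continuous L := by
    apply Continuous.prodMk
    · exact continuous_const.add (continuous_const.smul continuous_fst)
    · exact continuous_const.mul continuous_snd
  have hW' : L ⁻¹' W ∈ 𝓝 ((0 : B), (1 : S)) := by
    apply hLcont.continuousAt.preimage_mem_nhds
    have : L ((0 : B), (1 : S)) = (b₀, σ₀) := by
      simp [hLdef, smul_zero]
    rw [this]
    exact hWopen.mem_nhds hw₀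
  have him := aux_pushout_nhds_one hE hP hW'
  set c : S' := ι' b₀ * f' σ₀ with hcdef
  have hkey : (fun y => c * y) '' ((fun w : B × S => ι' w.1 * f' w.2) '' (L ⁻¹' W))
      ⊆ (fun w : B × S => ι' w.1 * f' w.2) '' W := by
    rintro _ ⟨_, ⟨w, hw, rfl⟩, rfl⟩
    refine ⟨L w, hw, ?_⟩
    rw [hLdef]
    simp only []
    rw [← aux_pushout_mul hP]
  refine Filter.mem_of_superset ?_ hkey
  have := (Homeomorph.mulLeft c).isOpenMap.image_mem_nhds him
  simpa using this

omit [IsTopologicalAddGroup B] [ContinuousSMul G B] in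
/-- Well-definedness: the value of `ι'' b * f'' σ` only depends on
`ι' b * f' σ`. -/
lemma aux_welldef (hE : IsCompatibleExtension ι p)
    (hP₁ : IsPushout ι p f ι' p' f')
    {S'' : Type*} [Group S''] [TopologicalSpace S'']
    {ι'' : B → S''} {p'' : S'' →* G} {f'' : S → S''}
    (hP₂ : IsPushout ι p f ι'' p'' f'')
    (w w' : B × S) (h : ι' w.1 * f' w.2 = ι' w'.1 * f' w'.2) :
    ι'' w.1 * f'' w.2 = ι'' w'.1 * f'' w'.2 := by
  obtain ⟨b, σ⟩ := w
  obtain ⟨b', σ'⟩ := w'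
  simp only [] at h ⊢
  have hp : p σ = p σ' := by
    have := congrArg p' h
    rwa [aux_pushout_p hP₁, aux_pushout_p hP₁] at this
  have hker : p (σ * σ'⁻¹) = 1 := by
    rw [map_mul, map_inv, hp, mul_inv_cancel]
  obtain ⟨a, ha⟩ := aux_mem_ker hE hker
  have hσ : σ = ι a * σ' := by
    rw [ha]; group
  have hb' : b + f a = b' := by
    apply hP₁.ext.ι_embedding.injective
    have h1 : ι' b * (ι' (f a) * f' σ') = ι' b' * f' σ' := by
      rw [hP₁.comm_ι, ← hP₁.f'_hom, ← hσ]; exact h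
    have h2 : ι' (b + f a) * f' σ' = ι' b' * f' σ' := by
      rw [hP₁.ext.ι_hom, mul_assoc]; exact h1
    exact mul_right_cancel h2
  rw [← hb', hP₂.ext.ι_hom, hσ, hP₂.f'_hom, hP₂.comm_ι]
  group

end Aux


/-- (Uniqueness of the pushout up to proper isomorphism;
group case.)  Let `(Σ, ι, p)` be a compatible extension of `G` by `A` (all
groups locally compact Hausdorff) and `f : A → B` a continuous
`G`-equivariant group homomorphism.  If `(Σ₁, f₁)` and `(Σ₂, f₂)` are both
`f`-pushouts of `(Σ, ι, p)`, then there is an isomorphism of topological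
groups `g : Σ₁ → Σ₂` with `g ∘ ι₁ = ι₂`, `p₂ ∘ g = p₁` and `g ∘ f₁ = f₂`. -/
theorem pushout_unique_up_to_proper_iso
    {G A B S S₁ S₂ : Type*} [Group G] [TopologicalSpace G] [IsTopologicalGroup G]
    [LocallyCompactSpace G] [T2Space G]
    [AddCommGroup A] [TopologicalSpace A] [IsTopologicalAddGroup A]
    [LocallyCompactSpace A] [T2Space A]
    [DistribMulAction G A] [ContinuousSMul G A]
    [AddCommGroup B] [TopologicalSpace B] [IsTopologicalAddGroup B]
    [LocallyCompactSpace B] [T2Space B]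
    [DistribMulAction G B] [ContinuousSMul G B]
    [Group S] [TopologicalSpace S] [IsTopologicalGroup S]
    [LocallyCompactSpace S] [T2Space S]
    [Group S₁] [TopologicalSpace S₁] [LocallyCompactSpace S₁] [T2Space S₁]
    [Group S₂] [TopologicalSpace S₂] [LocallyCompactSpace S₂] [T2Space S₂]
    (ι : A → S) (p : S →* G) (hE : IsCompatibleExtension ι p)
    (f : A → B) (hf_cont : Continuous f)
    (hf_hom : ∀ a a', f (a + a') = f a + f a')
    (hf_equiv : ∀ (g : G) (a : A), f (g • a) = g • f a)
    (ι₁ : B → S₁) (p₁ : S₁ →* G) (f₁ : S → S₁)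
    (ι₂ : B → S₂) (p₂ : S₂ →* G) (f₂ : S → S₂)
    (h₁ : IsPushout ι p f ι₁ p₁ f₁)
    (h₂ : IsPushout ι p f ι₂ p₂ f₂) :
    ∃ g : S₁ ≃ₜ S₂,
      (∀ x y : S₁, g (x * y) = g x * g y) ∧
      (∀ b : B, g (ι₁ b) = ι₂ b) ∧
      (∀ x : S₁, p₂ (g x) = p₁ x) ∧
      (∀ σ : S, g (f₁ σ) = f₂ σ) := by
  classical
  haveI := h₁.ext.topGroup
  haveI := h₂.ext.topGroup
  set Φ₁ : B × S → S₁ := fun w => ι₁ w.1 * f₁ w.2 with hΦ₁def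
  set Φ₂ : B × S → S₂ := fun w => ι₂ w.1 * f₂ w.2 with hΦ₂def
  -- sections
  have hsec₁ : ∀ x : S₁, Φ₁ ((aux_pushout_surj hE h₁ x).choose) = x :=
    fun x => (aux_pushout_surj hE h₁ x).choose_spec
  have hsec₂ : ∀ y : S₂, Φ₂ ((aux_pushout_surj hE h₂ y).choose) = y :=
    fun y => (aux_pushout_surj hE h₂ y).choose_spec
  set gfun : S₁ → S₂ := fun x => Φ₂ ((aux_pushout_surj hE h₁ x).choose) with hgdef
  set gfun' : S₂ → S₁ := fun y => Φ₁ ((aux_pushout_surj hE h₂ y).choose) with hg'def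
  have key : ∀ w : B × S, gfun (Φ₁ w) = Φ₂ w := by
    intro w
    exact aux_welldef hE h₁ h₂ ((aux_pushout_surj hE h₁ (Φ₁ w)).choose) w
      (hsec₁ (Φ₁ w))
  have key' : ∀ w : B × S, gfun' (Φ₂ w) = Φ₁ w := by
    intro w
    exact aux_welldef hE h₂ h₁ ((aux_pushout_surj hE h₂ (Φ₂ w)).choose) w
      (hsec₂ (Φ₂ w))
  have hleft : Function.LeftInverse gfun' gfun := by
    intro x
    have h1 : gfun' (gfun x) = Φ₁ ((aux_pushout_surj hE h₁ x).choose) :=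
      key' ((aux_pushout_surj hE h₁ x).choose)
    rw [h1, hsec₁]
  have hright : Function.LeftInverse gfun gfun' := by
    intro y
    have h1 : gfun (gfun' y) = Φ₂ ((aux_pushout_surj hE h₂ y).choose) :=
      key ((aux_pushout_surj hE h₂ y).choose)
    rw [h1, hsec₂]
  -- continuity of both directions
  have hΦ₂cont : Continuous Φ₂ :=
    (h₂.ext.ι_embedding.continuous.comp continuous_fst).mul
      (h₂.f'_cont.comp continuous_snd)
  have hΦ₁cont : Continuous Φ₁ :=
    (h₁.ext.ι_embedding.continuous.comp continuous_fst).mul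
      (h₁.f'_cont.comp continuous_snd)
  have hgcont : Continuous gfun := by
    rw [continuous_def]
    intro O hO
    have heq : gfun ⁻¹' O = Φ₁ '' (Φ₂ ⁻¹' O) := by
      ext x
      constructor
      · intro hx
        exact ⟨(aux_pushout_surj hE h₁ x).choose, hx, hsec₁ x⟩
      · rintro ⟨w, hw, rfl⟩
        show gfun (Φ₁ w) ∈ O
        rw [key]; exact hw
    rw [heq]
    exact aux_pushout_isOpenMap hE h₁ _ (hO.preimage hΦ₂cont)
  have hg'cont : Continuous gfun' := by
    rw [continuous_def]
    intro O hO
    have heq : gfun' ⁻¹' O = Φ₂ '' (Φ₁ ⁻¹' O) := by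
      ext y
      constructor
      · intro hy
        exact ⟨(aux_pushout_surj hE h₂ y).choose, hy, hsec₂ y⟩
      · rintro ⟨w, hw, rfl⟩
        show gfun' (Φ₂ w) ∈ O
        rw [key']; exact hw
    rw [heq]
    exact aux_pushout_isOpenMap hE h₂ _ (hO.preimage hΦ₁cont)
  refine ⟨⟨⟨gfun, gfun', hleft, hright⟩, hgcont, hg'cont⟩, ?_, ?_, ?_, ?_⟩
  · -- multiplicativity
    intro x y
    show gfun (x * y) = gfun x * gfun y
    set w := (aux_pushout_surj hE h₁ x).choose
    set w' := (aux_pushout_surj hE h₁ y).choose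
    have hx : Φ₁ w = x := hsec₁ x
    have hy : Φ₁ w' = y := hsec₁ y
    have hxy : x * y = Φ₁ (w.1 + p w.2 • w'.1, w.2 * w'.2) := by
      rw [← hx, ← hy, hΦ₁def]
      simp only []
      rw [aux_pushout_mul h₁]
    rw [hxy, key, ← hx, ← hy, key, key, hΦ₂def]
    simp only []
    rw [aux_pushout_mul h₂]
  · -- compatibility with ι
    intro b
    show gfun (ι₁ b) = ι₂ b
    have hb : ι₁ b = Φ₁ (b, 1) := by
      simp [hΦ₁def, aux_mhom_map_one h₁.f'_hom]
    rw [hb, key, hΦ₂def]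
    simp [aux_mhom_map_one h₂.f'_hom]
  · -- compatibility with p
    intro x
    show p₂ (gfun x) = p₁ x
    have h1 : p₂ (gfun x) = p ((aux_pushout_surj hE h₁ x).choose).2 :=
      aux_pushout_p h₂ ((aux_pushout_surj hE h₁ x).choose).1
        ((aux_pushout_surj hE h₁ x).choose).2
    have h2 : p₁ x = p ((aux_pushout_surj hE h₁ x).choose).2 := by
      conv_lhs => rw [← hsec₁ x]
      exact aux_pushout_p h₁ ((aux_pushout_surj hE h₁ x).choose).1
        ((aux_pushout_surj hE h₁ x).choose).2
    rw [h1, h2]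
  · -- compatibility with f
    intro σ
    show gfun (f₁ σ) = f₂ σ
    have hσ : f₁ σ = Φ₁ (0, σ) := by
      simp [hΦ₁def, aux_hom_map_zero h₁.ext.ι_hom]
    rw [hσ, key, hΦ₂def]
    simp [aux_hom_map_zero h₂.ext.ι_hom]
end

section
/- (Inverses in the extension group; group case of the paper's Example.) Assume (Σ, ι, p) is a compatible extension of G by A. Then for every pair (σ, τ) ∈ Σ × Σ with p(σ) = p(τ) there is a unique element a(σ, τ) ∈ A with ι(a(σ, τ)) = σ·τ⁻¹, and the map h : {(σ, τ) ∈ Σ × Σ : p(σ) = p(τ)} → A ⋊ G defined by h(σ, τ) = (a(σ, τ), p(σ)) is a continuous group homomorphism (the domain carries componentwise multiplication and the subspace topology; A ⋊ G is A × G with multiplication (a₁, g₁)(a₂, g₂) = (a₁ + g₁ • a₂, g₁g₂)). Moreover h(ι(a), ι(−a')) = (a + a', 1) for all a, a' ∈ A, and the G-component of h(σ, τ) is p(σ). (Thus h exhibits A ⋊ G as the pushout of Σ ×_G Σ⁻¹ along addition, so [Σ] + [Σ⁻¹] = [SD(A, G)].) -/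
open Topology

/-- Constructor for elements of `SDP B S p`. -/
def SDP.mk {G S B : Type*} [Group G] [Group S] [AddCommGroup B]
    [DistribMulAction G B] (p : S →* G) (b : B) (s : S) : SDP B S p := (b, s)

/-- (Inverses in the extension group; group case.)  Let
`(Σ, ι, p)` be a compatible extension of `G` by `A`.  For every pair
`(σ, τ)` with `p σ = p τ` there is a unique `a(σ, τ) ∈ A` with
`ι(a(σ, τ)) = σ·τ⁻¹`, and `h(σ, τ) = (a(σ, τ), p σ)` is a continuous group
homomorphism from `{(σ, τ) : p σ = p τ}` (componentwise operations, subspace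
topology) to `A ⋊ G`.  Moreover `h(ι(a), ι(−a')) = (a + a', 1)` and the
`G`-component of `h(σ, τ)` is `p σ`.  (Thus `h` exhibits `A ⋊ G` as the
pushout of `Σ ×_G Σ⁻¹` along addition, so `[Σ] + [Σ⁻¹] = [SD(A, G)]`.) -/
theorem extension_inverse_class
    {G A S : Type*} [Group G] [TopologicalSpace G] [IsTopologicalGroup G]
    [AddCommGroup A] [TopologicalSpace A] [IsTopologicalAddGroup A]
    [DistribMulAction G A] [ContinuousSMul G A]
    [Group S] [TopologicalSpace S] [IsTopologicalGroup S]
    (ι : A → S) (p : S →* G) (hE : IsCompatibleExtension ι p) :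
    -- unique `a(σ, τ)` with `ι (a(σ, τ)) = σ τ⁻¹`
    (∀ σ τ : S, p σ = p τ → ∃! a : A, ι a = σ * τ⁻¹) ∧
    -- `{(σ, τ) : p σ = p τ}` is a subgroup of `Σ × Σ` …
    ∃ T : Subgroup (S × S), (T : Set (S × S)) = {x : S × S | p x.1 = p x.2} ∧
      -- … and `h(σ, τ) = (a(σ, τ), p σ)` is a continuous homomorphism into `A ⋊ G`
      ∃ h : T → SDP A G (MonoidHom.id G),
        (∀ x : T, ι (h x).1 = (x : S × S).1 * ((x : S × S).2)⁻¹ ∧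
          (h x).2 = p (x : S × S).1) ∧
        Continuous h ∧
        (∀ x y : T, h (x * y) = h x * h y) ∧
        (∀ (a a' : A) (hmem : (ι a, ι (-a')) ∈ T),
          h ⟨(ι a, ι (-a')), hmem⟩ = SDP.mk (MonoidHom.id G) (a + a') 1) := by
  obtain ⟨hTG, hιhom, hemb, hpc, hpo, hps, hrange, hcompat⟩ := hE
  have hιinj := hemb.injective
  have : Nonempty A := ⟨0⟩
  have hmem : ∀ s : S, p s = 1 → s ∈ Set.range ι := fun s hs => by
    rw [hrange]; exact hs
  have hp_ι : ∀ a, p (ι a) = 1 := fun a => by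
    have : ι a ∈ Set.range ι := ⟨a, rfl⟩
    rwa [hrange] at this
  have hι0 : ι 0 = 1 := by
    have h00 := hιhom 0 0
    rw [add_zero] at h00
    exact (left_eq_mul.mp h00)
  set ainv := Function.invFun ι with hainv
  have hι_ainv : ∀ s : S, p s = 1 → ι (ainv s) = s := fun s hs =>
    Function.invFun_eq (hmem s hs)
  refine ⟨fun σ τ hστ => ?_, ?_⟩
  · have h1 : p (σ * τ⁻¹) = 1 := by
      rw [map_mul, map_inv, hστ, mul_inv_cancel]
    obtain ⟨a, ha⟩ := hmem _ h1
    exact ⟨a, ha, fun b hb => hιinj (hb.trans ha.symm)⟩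
  · refine ⟨{ carrier := {x : S × S | p x.1 = p x.2}
              one_mem' := rfl
              mul_mem' := fun {x y} hx hy => by
                simp only [Set.mem_setOf_eq, Prod.fst_mul, Prod.snd_mul, map_mul] at *
                rw [hx, hy]
              inv_mem' := fun {x} hx => by
                simp only [Set.mem_setOf_eq, Prod.fst_inv, Prod.snd_inv, map_inv] at *
                rw [hx] }, rfl, ?_⟩
    have hT : ∀ x : S × S, x ∈ {x : S × S | p x.1 = p x.2} → p (x.1 * x.2⁻¹) = 1 := by
      intro x hx
      rw [map_mul, map_inv, hx, mul_inv_cancel]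
    refine ⟨fun x => ((ainv ((x : S × S).1 * ((x : S × S).2)⁻¹)), p (x : S × S).1), ?_, ?_, ?_, ?_⟩
    · exact fun x => ⟨hι_ainv _ (hT _ x.2), rfl⟩
    · -- continuity
      apply Continuous.prodMk
      · rw [hemb.continuous_iff]
        have hc : Continuous fun x : S × S => x.1 * x.2⁻¹ := by fun_prop
        refine (hc.comp continuous_subtype_val).congr fun x => ?_
        exact (hι_ainv _ (hT _ x.2)).symm
      · exact hpc.comp (continuous_fst.comp continuous_subtype_val)
    · -- hom
      intro x y
      obtain ⟨⟨x1, x2⟩, hx⟩ := x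
      obtain ⟨⟨y1, y2⟩, hy⟩ := y
      refine Prod.ext (hιinj ?_) (by simp [SDP.mul_def, map_mul]; rfl)
      have e1 : ι (ainv (x1 * y1 * (x2 * y2)⁻¹)) = x1 * y1 * (x2 * y2)⁻¹ :=
        hι_ainv _ (hT (x1 * y1, x2 * y2) (mul_mem hx hy))
      have e2 : ι (ainv (x1 * x2⁻¹)) = x1 * x2⁻¹ := hι_ainv _ (hT _ hx)
      have e3 : ι (ainv (y1 * y2⁻¹)) = y1 * y2⁻¹ := hι_ainv _ (hT _ hy)
      show ι (ainv (x1 * y1 * (x2 * y2)⁻¹)) =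
        ι (ainv (x1 * x2⁻¹) + p x1 • ainv (y1 * y2⁻¹))
      rw [hιhom, e2]
      have e4 : ι (p x1 • ainv (y1 * y2⁻¹)) = x1 * (y1 * y2⁻¹) * x1⁻¹ := by
        rw [← hcompat x1, e3]
      have e5 : ι (p x1 • ainv (y1 * y2⁻¹)) = x2 * (y1 * y2⁻¹) * x2⁻¹ := by
        have hx' : p x1 = p x2 := hx
        rw [hx', ← hcompat x2, e3]
      rw [e1, e5]
      group
    · intro a a' hmem'
      refine Prod.ext (hιinj ?_) ?_
      · show ι (ainv (ι a * (ι (-a'))⁻¹)) = ι (a + a')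
        rw [hι_ainv _ (hT _ hmem'), hιhom]
        congr 1
        refine inv_eq_of_mul_eq_one_left ?_
        rw [← hιhom, add_neg_cancel, hι0]
      · show p (ι a) = 1
        exact hp_ι a
end

section
/- (Compositionality of pushouts; group case of the paper's Corollary.) Assume G, A, B, C and all extension groups below are locally compact Hausdorff, (Σ, ι, p) is a compatible extension of G by A, and f : A → B and g : B → C are continuous G-equivariant group homomorphisms. If (Σ₁, f₁) is an f-pushout of (Σ, ι, p), (Σ₂, f₂) is a g-pushout of (Σ₁, ι₁, p₁), and (Σ₃, f₃) is a (g ∘ f)-pushout of (Σ, ι, p), then there exists an isomorphism of topological groups h : Σ₂ → Σ₃ such that h ∘ ι₂ = ι₃, p₃ ∘ h = p₂, and h ∘ f₂ ∘ f₁ = f₃. (That is, g₊(f₊Σ) is properly isomorphic to (g ∘ f)₊Σ.) -/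
open Topology

section Unique

variable {G A C S S₂ S₃ : Type*} [Group G] [TopologicalSpace G]
    [AddCommGroup A] [TopologicalSpace A] [DistribMulAction G A]
    [AddCommGroup C] [TopologicalSpace C] [DistribMulAction G C]
    [Group S] [TopologicalSpace S]
    [Group S₂] [TopologicalSpace S₂] [Group S₃] [TopologicalSpace S₃]

namespace IsCompatibleExtension

variable {ι' : C → S₂} {p' : S₂ →* G}

lemma map_zero' (hE : IsCompatibleExtension ι' p') : ι' 0 = 1 := by
  have h : ι' 0 = ι' 0 * ι' 0 := by rw [← hE.ι_hom, add_zero]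
  exact left_eq_mul.mp h

lemma exists_of_ker (hE : IsCompatibleExtension ι' p') {τ : S₂} (h : p' τ = 1) :
    ∃ c, ι' c = τ := by
  have : τ ∈ Set.range ι' := by
    rw [hE.range_ι]; simpa using h
  exact this

lemma p_ι (hE : IsCompatibleExtension ι' p') (c : C) : p' (ι' c) = 1 := by
  have : ι' c ∈ Set.range ι' := ⟨c, rfl⟩
  rw [hE.range_ι] at this
  simpa using this

end IsCompatibleExtension

namespace IsPushout

variable {ι : A → S} {p : S →* G} {F : A → C}
variable {ι₂ : C → S₂} {p₂ : S₂ →* G} {F₂ : S → S₂}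

lemma map_one' (h₂ : IsPushout ι p F ι₂ p₂ F₂) : F₂ 1 = 1 := by
  have h : F₂ 1 = F₂ 1 * F₂ 1 := by rw [← h₂.f'_hom, mul_one]
  exact left_eq_mul.mp h

/-- Commutation rule: `F₂ σ * ι₂ c = ι₂ (p σ • c) * F₂ σ`. -/
lemma swap (h₂ : IsPushout ι p F ι₂ p₂ F₂) (σ : S) (c : C) :
    F₂ σ * ι₂ c = ι₂ (p σ • c) * F₂ σ := by
  have h := h₂.ext.compat (F₂ σ) c
  rw [h₂.comm_p] at h
  calc F₂ σ * ι₂ c = F₂ σ * ι₂ c * (F₂ σ)⁻¹ * F₂ σ := by group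
    _ = ι₂ (p σ • c) * F₂ σ := by rw [h]

end IsPushout

/-- Well-definedness: equal decompositions in one pushout give
equal elements in the other. -/
lemma pushout_wd
    {ι : A → S} {p : S →* G} {F : A → C}
    {ι₂ : C → S₂} {p₂ : S₂ →* G} {F₂ : S → S₂}
    {ι₃ : C → S₃} {p₃ : S₃ →* G} {F₃ : S → S₃}
    (hE : IsCompatibleExtension ι p)
    (h₂ : IsPushout ι p F ι₂ p₂ F₂) (h₃ : IsPushout ι p F ι₃ p₃ F₃)
    {c c' : C} {σ σ' : S} (h : ι₂ c * F₂ σ = ι₂ c' * F₂ σ') :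
    ι₃ c * F₃ σ = ι₃ c' * F₃ σ' := by
  have hp : p σ = p σ' := by
    have := congrArg p₂ h
    simpa [map_mul, h₂.ext.p_ι, h₂.comm_p] using this
  obtain ⟨a, ha⟩ : ∃ a, ι a = σ * σ'⁻¹ := by
    apply hE.exists_of_ker
    simp [map_mul, map_inv, hp]
  have hσ : σ = ι a * σ' := by rw [ha]; group
  have hc : c' = c + F a := by
    have e1 : ι₂ c * F₂ (ι a * σ') = ι₂ c' * F₂ σ' := by rw [← hσ]; exact h
    rw [h₂.f'_hom, ← h₂.comm_ι, ← mul_assoc, ← h₂.ext.ι_hom] at e1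
    have e2 : ι₂ (c + F a) = ι₂ c' := mul_right_cancel e1
    exact (h₂.ext.ι_embedding.injective e2).symm
  rw [hσ, hc, h₃.ext.ι_hom, h₃.f'_hom, ← h₃.comm_ι, mul_assoc]

/-- Local decomposition: every element of the pushout near `1` decomposes as
`ι' c * F' σ` with `c` and `σ` near the identities. -/
lemma pushout_decomp
    {S' : Type*} [Group S'] [TopologicalSpace S']
    {ι : A → S} {p : S →* G} {F : A → C}
    {ι' : C → S'} {p' : S' →* G} {F' : S → S'}
    (hE : IsCompatibleExtension ι p)
    (hP : IsPushout ι p F ι' p' F')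
    {U : Set C} (hU : U ∈ 𝓝 (0 : C)) {V : Set S} (hV : V ∈ 𝓝 (1 : S)) :
    ∃ W ∈ 𝓝 (1 : S'), ∀ τ ∈ W, ∃ c ∈ U, ∃ σ ∈ V, τ = ι' c * F' σ := by
  haveI := hP.ext.topGroup
  obtain ⟨W₁', hW₁'mem, hsub⟩ : ∃ W₁' ∈ 𝓝 (1 : S'), ι' ⁻¹' W₁' ⊆ U := by
    have hcomap : 𝓝 (0 : C) = Filter.comap ι' (𝓝 (ι' 0)) :=
      hP.ext.ι_embedding.toIsInducing.nhds_eq_comap 0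
    rw [hP.ext.map_zero'] at hcomap
    rw [hcomap] at hU
    exact Filter.mem_comap.mp hU
  obtain ⟨W₁, hW₁o, hW₁1, hW₁mul⟩ := exists_open_nhds_one_mul_subset hW₁'mem
  have hF'1 : F' 1 = 1 := hP.map_one'
  set V₀ := V ∩ F' ⁻¹' {x : S' | x⁻¹ ∈ W₁} with hV₀def
  have hV₀ : V₀ ∈ 𝓝 (1 : S) := by
    apply Filter.inter_mem hV
    have hinv : {x : S' | x⁻¹ ∈ W₁} ∈ 𝓝 (1 : S') := by
      have := (continuous_inv (G := S')).continuousAt (x := (1 : S'))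
      have h1 := this (hW₁o.mem_nhds (by simpa using hW₁1))
      exact (by simpa [Filter.mem_inv] using h1 : W₁⁻¹ ∈ 𝓝 (1 : S'))
    have := hP.f'_cont.continuousAt (x := (1 : S))
    rw [ContinuousAt, hF'1] at this
    exact this hinv
  have hpV₀ : p '' V₀ ∈ 𝓝 (1 : G) := by
    have := hE.p_open.image_mem_nhds hV₀
    rwa [map_one] at this
  refine ⟨p' ⁻¹' (p '' V₀) ∩ W₁, ?_, ?_⟩
  · refine Filter.inter_mem ?_ (hW₁o.mem_nhds hW₁1)
    have := hP.ext.p_cont.continuousAt (x := (1 : S'))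
    rw [ContinuousAt, map_one] at this
    exact this hpV₀
  · rintro τ ⟨hτp, hτW⟩
    obtain ⟨σ, hσV₀, hpσ⟩ := hτp
    have hker : p' (τ * (F' σ)⁻¹) = 1 := by
      simp [map_mul, map_inv, hP.comm_p, hpσ]
    obtain ⟨c, hc⟩ := hP.ext.exists_of_ker hker
    refine ⟨c, ?_, σ, hσV₀.1, ?_⟩
    · apply hsub
      show ι' c ∈ W₁'
      rw [hc]
      exact hW₁mul (Set.mul_mem_mul hτW hσV₀.2)
    · rw [hc]; group

/-- Continuity at the identity of any decomposition-compatible map. -/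
lemma pushout_contAux
    {T T' : Type*} [Group T] [TopologicalSpace T]
    [Group T'] [TopologicalSpace T']
    {ι : A → S} {p : S →* G} {F : A → C}
    {ιT : C → T} {pT : T →* G} {FT : S → T}
    {ιT' : C → T'} {pT' : T' →* G} {FT' : S → T'}
    (hE : IsCompatibleExtension ι p)
    (hPT : IsPushout ι p F ιT pT FT) (hPT' : IsPushout ι p F ιT' pT' FT')
    (χ : T → T') (hχ1 : χ 1 = 1)
    (hkey : ∀ (τ : T) (c : C) (σ : S), τ = ιT c * FT σ → χ τ = ιT' c * FT' σ) :
    ContinuousAt χ 1 := by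
  haveI := hPT'.ext.topGroup
  rw [ContinuousAt, hχ1]
  intro W₃ hW₃
  rw [Filter.mem_map]
  obtain ⟨W₃', hW₃'o, hW₃'1, hm⟩ := exists_open_nhds_one_mul_subset hW₃
  have hU : ιT' ⁻¹' W₃' ∈ 𝓝 (0 : C) := by
    have hc := hPT'.ext.ι_embedding.continuous.continuousAt (x := (0 : C))
    rw [ContinuousAt, hPT'.ext.map_zero'] at hc
    exact hc (hW₃'o.mem_nhds hW₃'1)
  have hVm : FT' ⁻¹' W₃' ∈ 𝓝 (1 : S) := by
    have hc := hPT'.f'_cont.continuousAt (x := (1 : S))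
    rw [ContinuousAt, hPT'.map_one'] at hc
    exact hc (hW₃'o.mem_nhds hW₃'1)
  obtain ⟨W, hWm, hWd⟩ := pushout_decomp hE hPT hU hVm
  apply Filter.mem_of_superset hWm
  intro τ hτ
  obtain ⟨c, hcU, σ, hσV, hτeq⟩ := hWd τ hτ
  show χ τ ∈ W₃
  rw [hkey τ c σ hτeq]
  exact hm (Set.mul_mem_mul hcU hσV)

/-- Uniqueness of pushouts up to proper isomorphism of topological groups. -/
theorem pushout_unique
    {ι : A → S} {p : S →* G} {F : A → C}
    {ι₂ : C → S₂} {p₂ : S₂ →* G} {F₂ : S → S₂}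
    {ι₃ : C → S₃} {p₃ : S₃ →* G} {F₃ : S → S₃}
    (hE : IsCompatibleExtension ι p)
    (h₂ : IsPushout ι p F ι₂ p₂ F₂) (h₃ : IsPushout ι p F ι₃ p₃ F₃) :
    ∃ h : S₂ ≃ₜ S₃,
      (∀ x y : S₂, h (x * y) = h x * h y) ∧
      (∀ c : C, h (ι₂ c) = ι₃ c) ∧
      (∀ x : S₂, p₃ (h x) = p₂ x) ∧
      (∀ σ : S, h (F₂ σ) = F₃ σ) := by
  classical
  haveI := h₂.ext.topGroup
  haveI := h₃.ext.topGroup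
  have hF₂1 : F₂ 1 = 1 := h₂.map_one'
  have hF₃1 : F₃ 1 = 1 := h₃.map_one'
  -- existence of decompositions
  have exd₂ : ∀ τ : S₂, ∃ cc : C × S, τ = ι₂ cc.1 * F₂ cc.2 := by
    intro τ
    obtain ⟨σ, hσ⟩ := hE.p_surj (p₂ τ)
    have hker : p₂ (τ * (F₂ σ)⁻¹) = 1 := by
      simp [map_mul, map_inv, h₂.comm_p, hσ]
    obtain ⟨c, hc⟩ := h₂.ext.exists_of_ker hker
    exact ⟨(c, σ), by rw [hc]; group⟩
  have exd₃ : ∀ τ : S₃, ∃ cc : C × S, τ = ι₃ cc.1 * F₃ cc.2 := by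
    intro τ
    obtain ⟨σ, hσ⟩ := hE.p_surj (p₃ τ)
    have hker : p₃ (τ * (F₃ σ)⁻¹) = 1 := by
      simp [map_mul, map_inv, h₃.comm_p, hσ]
    obtain ⟨c, hc⟩ := h₃.ext.exists_of_ker hker
    exact ⟨(c, σ), by rw [hc]; group⟩
  choose d₂ hd₂ using exd₂
  choose d₃ hd₃ using exd₃
  set φ : S₂ → S₃ := fun τ => ι₃ (d₂ τ).1 * F₃ (d₂ τ).2 with hφdef
  set ψ : S₃ → S₂ := fun τ => ι₂ (d₃ τ).1 * F₂ (d₃ τ).2 with hψdef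
  have keyφ : ∀ (τ : S₂) (c : C) (σ : S), τ = ι₂ c * F₂ σ → φ τ = ι₃ c * F₃ σ := by
    intro τ c σ hh
    exact pushout_wd hE h₂ h₃ ((hd₂ τ).symm.trans hh)
  have keyψ : ∀ (τ : S₃) (c : C) (σ : S), τ = ι₃ c * F₃ σ → ψ τ = ι₂ c * F₂ σ := by
    intro τ c σ hh
    exact pushout_wd hE h₃ h₂ ((hd₃ τ).symm.trans hh)
  have hφι : ∀ c : C, φ (ι₂ c) = ι₃ c := by
    intro c
    rw [keyφ (ι₂ c) c 1 (by rw [hF₂1, mul_one]), hF₃1, mul_one]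
  have hφF : ∀ σ : S, φ (F₂ σ) = F₃ σ := by
    intro σ
    rw [keyφ (F₂ σ) 0 σ (by rw [h₂.ext.map_zero', one_mul]), h₃.ext.map_zero', one_mul]
  have hφ1 : φ 1 = 1 := by rw [← hF₂1, hφF, hF₃1]
  have hφp : ∀ τ : S₂, p₃ (φ τ) = p₂ τ := by
    intro τ
    conv_rhs => rw [hd₂ τ]
    rw [keyφ τ (d₂ τ).1 (d₂ τ).2 (hd₂ τ)]
    simp [map_mul, h₂.ext.p_ι, h₃.ext.p_ι, h₂.comm_p, h₃.comm_p]
  have hφmul : ∀ x y : S₂, φ (x * y) = φ x * φ y := by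
    intro x y
    obtain ⟨c, σ⟩ := id (d₂ x)
    have hx := hd₂ x
    have hy := hd₂ y
    set c₁ := (d₂ x).1; set σ₁ := (d₂ x).2
    set c₂ := (d₂ y).1; set σ₂ := (d₂ y).2
    have hxy : x * y = ι₂ (c₁ + p σ₁ • c₂) * F₂ (σ₁ * σ₂) := by
      rw [hx, hy, h₂.ext.ι_hom, h₂.f'_hom]
      calc ι₂ c₁ * F₂ σ₁ * (ι₂ c₂ * F₂ σ₂)
          = ι₂ c₁ * (F₂ σ₁ * ι₂ c₂) * F₂ σ₂ := by group
        _ = ι₂ c₁ * (ι₂ (p σ₁ • c₂) * F₂ σ₁) * F₂ σ₂ := by rw [h₂.swap]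
        _ = ι₂ c₁ * ι₂ (p σ₁ • c₂) * (F₂ σ₁ * F₂ σ₂) := by group
    rw [keyφ _ _ _ hxy, keyφ x c₁ σ₁ hx, keyφ y c₂ σ₂ hy,
      h₃.ext.ι_hom, h₃.f'_hom]
    calc ι₃ c₁ * ι₃ (p σ₁ • c₂) * (F₃ σ₁ * F₃ σ₂)
        = ι₃ c₁ * (ι₃ (p σ₁ • c₂) * F₃ σ₁) * F₃ σ₂ := by group
      _ = ι₃ c₁ * (F₃ σ₁ * ι₃ c₂) * F₃ σ₂ := by rw [h₃.swap]
      _ = ι₃ c₁ * F₃ σ₁ * (ι₃ c₂ * F₃ σ₂) := by group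
  have hψφ : ∀ τ : S₂, ψ (φ τ) = τ := by
    intro τ
    rw [keyφ τ (d₂ τ).1 (d₂ τ).2 (hd₂ τ)] 
    rw [keyψ _ (d₂ τ).1 (d₂ τ).2 rfl]
    exact (hd₂ τ).symm
  have hφψ : ∀ τ : S₃, φ (ψ τ) = τ := by
    intro τ
    rw [keyψ τ (d₃ τ).1 (d₃ τ).2 (hd₃ τ)]
    rw [keyφ _ (d₃ τ).1 (d₃ τ).2 rfl]
    exact (hd₃ τ).symm
  have hψmul : ∀ x y : S₃, ψ (x * y) = ψ x * ψ y := by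
    intro x y
    have hxy : x * y = φ (ψ x * ψ y) := by rw [hφmul, hφψ, hφψ]
    rw [hxy, hψφ]
  have hψ1 : ψ 1 = 1 := by
    have := hψφ 1
    rwa [hφ1] at this
  have hφc1 : ContinuousAt φ 1 := pushout_contAux hE h₂ h₃ φ hφ1 keyφ
  have hψc1 : ContinuousAt ψ 1 := pushout_contAux hE h₃ h₂ ψ hψ1 keyψ
  have hφcont : Continuous φ :=
    continuous_of_continuousAt_one (MonoidHom.mk' φ hφmul) hφc1
  have hψcont : Continuous ψ :=
    continuous_of_continuousAt_one (MonoidHom.mk' ψ hψmul) hψc1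
  exact ⟨⟨⟨φ, ψ, hψφ, hφψ⟩, hφcont, hψcont⟩, hφmul, hφι, hφp, hφF⟩

end Unique

/-- (Compositionality of pushouts; group case.)  Let
`(Σ, ι, p)` be a compatible extension of `G` by `A` (all groups locally
compact Hausdorff) and let `f : A → B`, `g : B → C` be continuous
`G`-equivariant homomorphisms.  If `(Σ₁, f₁)` is an `f`-pushout of
`(Σ, ι, p)`, `(Σ₂, f₂)` is a `g`-pushout of `(Σ₁, ι₁, p₁)`, and `(Σ₃, f₃)`
is a `(g ∘ f)`-pushout of `(Σ, ι, p)`, then there is an isomorphism of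
topological groups `h : Σ₂ → Σ₃` with `h ∘ ι₂ = ι₃`, `p₃ ∘ h = p₂` and
`h ∘ f₂ ∘ f₁ = f₃`; that is, `g₊(f₊Σ)` is properly isomorphic to
`(g ∘ f)₊Σ`. -/
theorem pushout_comp
    {G A B C S S₁ S₂ S₃ : Type*}
    [Group G] [TopologicalSpace G] [IsTopologicalGroup G]
    [LocallyCompactSpace G] [T2Space G]
    [AddCommGroup A] [TopologicalSpace A] [IsTopologicalAddGroup A]
    [LocallyCompactSpace A] [T2Space A]
    [DistribMulAction G A] [ContinuousSMul G A]
    [AddCommGroup B] [TopologicalSpace B] [IsTopologicalAddGroup B]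
    [LocallyCompactSpace B] [T2Space B]
    [DistribMulAction G B] [ContinuousSMul G B]
    [AddCommGroup C] [TopologicalSpace C] [IsTopologicalAddGroup C]
    [LocallyCompactSpace C] [T2Space C]
    [DistribMulAction G C] [ContinuousSMul G C]
    [Group S] [TopologicalSpace S] [IsTopologicalGroup S]
    [LocallyCompactSpace S] [T2Space S]
    [Group S₁] [TopologicalSpace S₁] [LocallyCompactSpace S₁] [T2Space S₁]
    [Group S₂] [TopologicalSpace S₂] [LocallyCompactSpace S₂] [T2Space S₂]
    [Group S₃] [TopologicalSpace S₃] [LocallyCompactSpace S₃] [T2Space S₃]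
    (ι : A → S) (p : S →* G) (hE : IsCompatibleExtension ι p)
    (f : A → B) (hf_cont : Continuous f)
    (hf_hom : ∀ a a', f (a + a') = f a + f a')
    (hf_equiv : ∀ (g : G) (a : A), f (g • a) = g • f a)
    (g : B → C) (hg_cont : Continuous g)
    (hg_hom : ∀ b b', g (b + b') = g b + g b')
    (hg_equiv : ∀ (x : G) (b : B), g (x • b) = x • g b)
    (ι₁ : B → S₁) (p₁ : S₁ →* G) (f₁ : S → S₁)
    (ι₂ : C → S₂) (p₂ : S₂ →* G) (f₂ : S₁ → S₂)
    (ι₃ : C → S₃) (p₃ : S₃ →* G) (f₃ : S → S₃)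
    (h₁ : IsPushout ι p f ι₁ p₁ f₁)
    (h₂ : IsPushout ι₁ p₁ g ι₂ p₂ f₂)
    (h₃ : IsPushout ι p (g ∘ f) ι₃ p₃ f₃) :
    ∃ h : S₂ ≃ₜ S₃,
      (∀ x y : S₂, h (x * y) = h x * h y) ∧
      (∀ c : C, h (ι₂ c) = ι₃ c) ∧
      (∀ x : S₂, p₃ (h x) = p₂ x) ∧
      (∀ σ : S, h (f₂ (f₁ σ)) = f₃ σ) := by
  have hcomp : IsPushout ι p (g ∘ f) ι₂ p₂ (f₂ ∘ f₁) :=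
    { ext := h₂.ext
      f'_cont := h₂.f'_cont.comp h₁.f'_cont
      f'_hom := fun σ τ => by
        show f₂ (f₁ (σ * τ)) = f₂ (f₁ σ) * f₂ (f₁ τ)
        rw [h₁.f'_hom, h₂.f'_hom]
      comm_ι := fun a => by
        show ι₂ (g (f a)) = f₂ (f₁ (ι a))
        rw [h₂.comm_ι, h₁.comm_ι]
      comm_p := fun σ => by
        show p₂ (f₂ (f₁ σ)) = p σ
        rw [h₂.comm_p, h₁.comm_p] }
  obtain ⟨h, hmul, hι, hp, hF⟩ := pushout_unique hE hcomp h₃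
  exact ⟨h, hmul, hι, hp, fun σ => hF σ⟩
end
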